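/- arXiv:math/0610371 — 2 statements merged into one kernel-verified Lean document; each statement's English description precedes it below -/
import Mathlib

section
/- Nondegeneracy of the Hessian on the complement of the fixed-point set: Let g be a linear isometry of ℝ^n and let W = range(1 − g) ⊆ ℝ^n (the image of the linear map id − g). Consider the symmetric bilinear form B on ℝ^n × ℝ^n given by B((α₁,β₁),(α₂,β₂)) = ⟨α₂ − g α₂, β₁⟩ + ⟨α₁ − g α₁, β₂⟩. Then the restriction of B to the subspace W × W is nondegenerate: if (α₁,β₁) ∈ W × W satisfies B((α₁,β₁),(α₂,β₂)) = 0 for all (α₂,β₂) ∈ W × W, then α₁ = 0 and β₁ = 0. -/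
open scoped RealInnerProductSpace

/-- Nondegeneracy of the Hessian of the equivariant phase on the complement of
the fixed-point set: the bilinear form
`B((α₁,β₁),(α₂,β₂)) = ⟨α₂ - gα₂, β₁⟩ + ⟨α₁ - gα₁, β₂⟩` restricted to
`W × W`, where `W = range(1 - g)`, is nondegenerate. -/
theorem equivariant_phase_hessian_nondegenerate
    (n : ℕ) (g : EuclideanSpace ℝ (Fin n) ≃ₗᵢ[ℝ] EuclideanSpace ℝ (Fin n))
    (W : Submodule ℝ (EuclideanSpace ℝ (Fin n)))
    (hW : W = LinearMap.range
      ((LinearMap.id : EuclideanSpace ℝ (Fin n) →ₗ[ℝ] EuclideanSpace ℝ (Fin n)) -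
        (g.toLinearEquiv : EuclideanSpace ℝ (Fin n) →ₗ[ℝ] EuclideanSpace ℝ (Fin n)))) :
    ∀ α₁ β₁ : EuclideanSpace ℝ (Fin n), α₁ ∈ W → β₁ ∈ W →
      (∀ α₂ β₂ : EuclideanSpace ℝ (Fin n), α₂ ∈ W → β₂ ∈ W →
        ⟪α₂ - g α₂, β₁⟫ + ⟪α₁ - g α₁, β₂⟫ = 0) →
      α₁ = 0 ∧ β₁ = 0 := by
  set E := EuclideanSpace ℝ (Fin n)
  set T : E →ₗ[ℝ] E :=
    (LinearMap.id : E →ₗ[ℝ] E) - (g.toLinearEquiv : E →ₗ[ℝ] E) with hT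
  have hTval : ∀ x : E, T x = x - g x := fun x => rfl
  -- membership in W
  have hmem : ∀ x : E, x - g x ∈ W := by
    intro x
    rw [hW]
    exact ⟨x, rfl⟩
  -- fixed points in W are zero
  have hfix : ∀ α : E, α ∈ W → g α = α → α = 0 := by
    intro α hα hg
    rw [hW] at hα
    obtain ⟨x, hx⟩ := hα
    have hx' : x - g x = α := hx
    have key : ⟪g x, α⟫ = ⟪x, α⟫ := by
      conv_lhs => rw [← hg]
      exact g.inner_map_map x α
    have h1 : ⟪α, α⟫ = 0 := by
      calc ⟪α, α⟫ = ⟪x - g x, α⟫ := by rw [hx']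
        _ = ⟪x, α⟫ - ⟪g x, α⟫ := inner_sub_left _ _ _
        _ = 0 := by rw [key, sub_self]
    exact inner_self_eq_zero.mp h1
  -- T maps W into W
  have hmaps : ∀ x ∈ W, T x ∈ W := by
    intro x _
    rw [hTval]
    exact hmem x
  -- restriction of T to W is injective hence surjective
  set f : W →ₗ[ℝ] W := T.restrict hmaps with hf
  have hinj : Function.Injective f := by
    rw [← LinearMap.ker_eq_bot]
    rw [LinearMap.ker_eq_bot']
    intro m hm
    have hm' : T (m : E) = 0 := congrArg Subtype.val hm
    rw [hTval] at hm'
    have hgm : g (m : E) = (m : E) := by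
      have := sub_eq_zero.mp hm'
      exact this.symm
    have := hfix (m : E) m.2 hgm
    exact Subtype.ext this
  have hsurj : Function.Surjective f :=
    (LinearMap.injective_iff_surjective).mp hinj
  intro α₁ β₁ hα₁ hβ₁ hB
  constructor
  · -- take α₂ = 0, β₂ = α₁ - g α₁
    have h := hB 0 (α₁ - g α₁) W.zero_mem (hmem α₁)
    simp only [map_zero, sub_zero, zero_sub, inner_zero_left] at h
    have h' : ⟪α₁ - g α₁, α₁ - g α₁⟫ = 0 := by simpa using h
    have hz : α₁ - g α₁ = 0 := inner_self_eq_zero.mp h'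
    exact hfix α₁ hα₁ (sub_eq_zero.mp hz).symm
  · -- find α₂ ∈ W with T α₂ = β₁
    obtain ⟨m, hm⟩ := hsurj ⟨β₁, hβ₁⟩
    have hm' : T (m : E) = β₁ := congrArg Subtype.val hm
    have h := hB (m : E) 0 m.2 W.zero_mem
    rw [hTval] at hm'
    rw [hm'] at h
    simp only [inner_zero_right, add_zero] at h
    exact inner_self_eq_zero.mp h
end

section
/- Meromorphic continuation from an asymptotic expansion: Let ρ : ℝ → ℂ be continuous on [1,∞), let a ∈ ℝ and let (M_j)_{j∈ℕ} be complex numbers such that for every k ∈ ℕ there is C_k > 0 with ‖ρ(r) − Σ_{j<k} M_j r^{a-j}‖ ≤ C_k · r^{a-k} for all r ≥ 1. Then the function ζ(z) := ∫_{1}^{∞} r^{-z} ρ(r) dr, which converges and is analytic for Re z > a + 1, extends to a meromorphic function F on all of ℂ whose only possible poles are simple poles at the points z = a+1−j, j ∈ ℕ, with residue M_j at a+1−j; that is, there exists F : ℂ → ℂ with F(z) = ζ(z) for Re z > a+1, F complex differentiable on ℂ \ {a+1−j : j ∈ ℕ}, and for each j the function z ↦ F(z) − M_j/(z − (a+1−j))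 extends holomorphically to a neighborhood of a+1−j. -/
open MeasureTheory Complex

open Set Filter Asymptotics Topology

namespace MCaux

variable (ρ : ℝ → ℂ) (a : ℝ) (M : ℕ → ℂ)

noncomputable def g (k : ℕ) (r : ℝ) : ℂ :=
  ρ r - ∑ j ∈ Finset.range k, M j * (r : ℂ) ^ ((a - j : ℝ) : ℂ)

noncomputable def I (k : ℕ) (z : ℂ) : ℂ :=
  ∫ r in Set.Ici (1:ℝ), (r : ℂ) ^ (-z) * g ρ a M k r

noncomputable def Fk (k : ℕ) (z : ℂ) : ℂ :=
  I ρ a M k z + ∑ j ∈ Finset.range k, M j / (z - ((a:ℂ) + 1 - j))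

noncomputable def F (z : ℂ) : ℂ := Fk ρ a M ⌈a + 2 - z.re⌉₊ z

lemma g_contOn (hcont : ContinuousOn ρ (Set.Ici 1)) (k : ℕ) :
    ContinuousOn (g ρ a M k) (Ici 1) := by
  apply hcont.sub
  apply continuousOn_finset_sum
  intro j _
  apply ContinuousOn.mul continuousOn_const
  intro r hr
  exact (Complex.continuousAt_ofReal_cpow_const r _
    (Or.inr (zero_lt_one.trans_le hr).ne')).continuousWithinAt

lemma integrand_contOn (k : ℕ) (z : ℂ) (hcont : ContinuousOn ρ (Set.Ici 1)) :
    ContinuousOn (fun r : ℝ => (r : ℂ) ^ (-z) * g ρ a M k r) (Ici 1) := by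
  apply ContinuousOn.mul _ (g_contOn ρ a M hcont k)
  intro r hr
  exact (Complex.continuousAt_ofReal_cpow_const r _
    (Or.inr (zero_lt_one.trans_le hr).ne')).continuousWithinAt

lemma I_integrable (hcont : ContinuousOn ρ (Set.Ici 1))
    {C : ℝ} {k : ℕ}
    (hb : ∀ r : ℝ, 1 ≤ r → ‖g ρ a M k r‖ ≤ C * r ^ (a - k))
    {z : ℂ} (hz : a + 1 - k < z.re) :
    IntegrableOn (fun r : ℝ => (r : ℂ) ^ (-z) * g ρ a M k r) (Ici 1) := by
  have hexp : a - k - z.re < -1 := by linarith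
  have hint : IntegrableOn (fun r : ℝ => C * r ^ (a - k - z.re)) (Ici 1) := by
    rw [integrableOn_Ici_iff_integrableOn_Ioi]
    exact (integrableOn_Ioi_rpow_of_lt hexp one_pos).const_mul C
  refine Integrable.mono' hint
    ((integrand_contOn ρ a M k z hcont).aestronglyMeasurable measurableSet_Ici) ?_
  rw [ae_restrict_iff' measurableSet_Ici]
  filter_upwards with r hr
  have hr0 : (0:ℝ) < r := lt_of_lt_of_le one_pos hr
  have h1 : ‖(r : ℂ) ^ (-z)‖ = r ^ (-z.re) := by
    rw [Complex.norm_cpow_eq_rpow_re_of_pos hr0, Complex.neg_re]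
  rw [norm_mul, h1]
  calc r ^ (-z.re) * ‖g ρ a M k r‖ ≤ r ^ (-z.re) * (C * r ^ (a - k)) := by
        exact mul_le_mul_of_nonneg_left (hb r hr) (Real.rpow_nonneg hr0.le _)
    _ = C * r ^ (a - k - z.re) := by
        rw [show a - k - z.re = -z.re + (a - k) by ring, Real.rpow_add hr0]
        ring

lemma I_eq_mellin (k : ℕ) (z : ℂ) :
    I ρ a M k z = mellin (Set.indicator (Ici 1) (g ρ a M k)) (1 - z) := by
  simp only [I, mellin, show (1 : ℂ) - z - 1 = -z by ring]
  have h : ∀ t : ℝ, (t:ℂ) ^ (-z) • Set.indicator (Ici (1:ℝ)) (g ρ a M k) t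
      = Set.indicator (Ici (1:ℝ)) (fun t : ℝ => (t:ℂ) ^ (-z) * g ρ a M k t) t := by
    intro t
    by_cases ht : t ∈ Ici (1:ℝ)
    · simp [Set.indicator_of_mem ht, smul_eq_mul]
    · simp [Set.indicator_of_notMem ht]
  simp_rw [h]
  rw [setIntegral_indicator measurableSet_Ici]
  have h2 : Ioi (0:ℝ) ∩ Ici 1 = Ici 1 :=
    inter_eq_self_of_subset_right fun x hx => mem_Ioi.mpr (lt_of_lt_of_le one_pos (mem_Ici.mp hx))
  rw [h2]

lemma locInt (hcont : ContinuousOn ρ (Set.Ici 1)) (k : ℕ) :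
    LocallyIntegrableOn (Set.indicator (Ici 1) (g ρ a M k)) (Ioi 0) := by
  rw [locallyIntegrableOn_iff isOpen_Ioi.isLocallyClosed]
  intro K hK hKc
  rw [IntegrableOn, integrable_indicator_iff measurableSet_Ici, IntegrableOn,
    Measure.restrict_restrict measurableSet_Ici]
  exact ((g_contOn ρ a M hcont k).mono inter_subset_left).integrableOn_compact
    (hKc.inter_left isClosed_Ici)

lemma O_top {C : ℝ} {k : ℕ}
    (hb : ∀ r : ℝ, 1 ≤ r → ‖g ρ a M k r‖ ≤ C * r ^ (a - k)) :
    Set.indicator (Ici 1) (g ρ a M k) =O[atTop] (fun x : ℝ => x ^ (a - k)) := by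
  rw [isBigO_iff]
  refine ⟨C, ?_⟩
  filter_upwards [eventually_ge_atTop 1] with r hr
  rw [Set.indicator_of_mem (show r ∈ Ici (1:ℝ) from hr),
    Real.norm_of_nonneg (Real.rpow_nonneg (by linarith) _)]
  exact hb r hr

lemma O_bot (k : ℕ) (b : ℝ) :
    Set.indicator (Ici 1) (g ρ a M k) =O[𝓝[>] (0:ℝ)] (fun x : ℝ => x ^ b) := by
  apply IsBigO.of_bound 1
  filter_upwards [Ioo_mem_nhdsGT_of_mem (by norm_num : (0:ℝ) ∈ Ico (0:ℝ) 1)] with t ht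
  rw [Set.indicator_of_notMem (by simpa using ht.2 : t ∉ Ici (1:ℝ))]
  simp only [norm_zero]
  positivity

lemma I_diff (hcont : ContinuousOn ρ (Set.Ici 1)) {C : ℝ} {k : ℕ}
    (hb : ∀ r : ℝ, 1 ≤ r → ‖g ρ a M k r‖ ≤ C * r ^ (a - k))
    {z : ℂ} (hz : a + 1 - k < z.re) :
    DifferentiableAt ℂ (I ρ a M k) z := by
  have htop := O_top ρ a M hb
  rw [show a - (k:ℝ) = -((k:ℝ) - a) by ring] at htop
  have h1 : DifferentiableAt ℂ (mellin (Set.indicator (Ici 1) (g ρ a M k))) (1 - z) :=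
    mellin_differentiableAt_of_isBigO_rpow (locInt ρ a M hcont k) htop
      (by simp only [Complex.sub_re, Complex.one_re]; linarith)
      (O_bot ρ a M k (-(((1:ℂ) - z).re - 1)))
      (by linarith)
  have h2 : DifferentiableAt ℂ (fun w : ℂ => 1 - w) z :=
    (differentiable_const (1:ℂ)).sub differentiable_id |>.differentiableAt
  have heq : I ρ a M k = fun w => mellin (Set.indicator (Ici 1) (g ρ a M k)) (1 - w) :=
    funext (I_eq_mellin ρ a M k)
  rw [heq]
  exact h1.comp z h2

lemma pow_eqOn {j : ℕ} {z : ℂ} :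
    EqOn (fun r : ℝ => (r:ℂ) ^ (-z) * (M j * (r:ℂ) ^ ((a - j : ℝ) : ℂ)))
      (fun r : ℝ => M j * (r:ℂ) ^ (-z + ((a - j : ℝ) : ℂ))) (Ici 1) := by
  intro r hr
  have hr0 : (r:ℂ) ≠ 0 := by
    simpa using (zero_lt_one.trans_le (mem_Ici.mp hr)).ne'
  simp only
  rw [Complex.cpow_add _ _ hr0]
  ring

lemma pow_re_lt {j : ℕ} {z : ℂ} (hz : a + 1 - j < z.re) :
    (-z + ((a - j : ℝ) : ℂ)).re < -1 := by
  simp only [Complex.add_re, Complex.neg_re, Complex.ofReal_re]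
  linarith

lemma pow_integrable {j : ℕ} {z : ℂ} (hz : a + 1 - j < z.re) :
    IntegrableOn (fun r : ℝ => (r:ℂ) ^ (-z) * (M j * (r:ℂ) ^ ((a - j : ℝ) : ℂ))) (Ici 1) := by
  have h := ((integrableOn_Ioi_cpow_of_lt (pow_re_lt a hz) one_pos).const_mul (M j))
  have h2 : IntegrableOn (fun r : ℝ => M j * (r:ℂ) ^ (-z + ((a - j : ℝ) : ℂ))) (Ici 1) :=
    (integrableOn_Ici_iff_integrableOn_Ioi (f := fun r : ℝ => M j * (r:ℂ) ^ (-z + ((a - j : ℝ) : ℂ)))).mpr h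
  exact h2.congr_fun (fun r hr => ((pow_eqOn a M) hr).symm) measurableSet_Ici

lemma pow_integral {j : ℕ} {z : ℂ} (hz : a + 1 - j < z.re) :
    ∫ r in Ici (1:ℝ), (r:ℂ) ^ (-z) * (M j * (r:ℂ) ^ ((a - j : ℝ) : ℂ))
      = M j / (z - ((a:ℂ) + 1 - j)) := by
  rw [setIntegral_congr_fun measurableSet_Ici (pow_eqOn a M),
    MeasureTheory.integral_Ici_eq_integral_Ioi, MeasureTheory.integral_const_mul,
    integral_Ioi_cpow_of_lt (pow_re_lt a hz) one_pos]
  have hw1 : -z + ((a - j : ℝ) : ℂ) + 1 = -(z - ((a:ℂ) + 1 - j)) := by push_cast; ring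
  rw [hw1, Complex.ofReal_one, Complex.one_cpow, neg_div_neg_eq, mul_one_div]

lemma step (hcont : ContinuousOn ρ (Set.Ici 1)) {C : ℝ} {k : ℕ}
    (hb : ∀ r : ℝ, 1 ≤ r → ‖g ρ a M (k+1) r‖ ≤ C * r ^ (a - (k+1 : ℕ)))
    {z : ℂ} (hz : a + 1 - k < z.re) :
    I ρ a M k z = I ρ a M (k+1) z + M k / (z - ((a:ℂ) + 1 - k)) := by
  have hz' : a + 1 - ((k+1 : ℕ) : ℝ) < z.re := by push_cast; linarith
  have h1 := I_integrable ρ a M hcont hb hz'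
  have h2 := pow_integrable a M (j := k) hz
  have heq : EqOn (fun r : ℝ => (r:ℂ) ^ (-z) * g ρ a M k r)
      (fun r : ℝ => (r:ℂ) ^ (-z) * g ρ a M (k+1) r
        + (r:ℂ) ^ (-z) * (M k * (r:ℂ) ^ ((a - k : ℝ) : ℂ))) (Ici 1) := by
    intro r _
    simp only [g, Finset.sum_range_succ]
    ring
  rw [show I ρ a M k z = ∫ r in Set.Ici (1:ℝ), (r : ℂ) ^ (-z) * g ρ a M k r from rfl,
    setIntegral_congr_fun measurableSet_Ici heq, integral_add h1 h2,
    pow_integral a M hz]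
  rfl

lemma Fk_step (hcont : ContinuousOn ρ (Set.Ici 1)) {C : ℝ} {k : ℕ}
    (hb : ∀ r : ℝ, 1 ≤ r → ‖g ρ a M (k+1) r‖ ≤ C * r ^ (a - (k+1 : ℕ)))
    {z : ℂ} (hz : a + 1 - k < z.re) :
    Fk ρ a M (k+1) z = Fk ρ a M k z := by
  simp only [Fk, Finset.sum_range_succ]
  rw [step ρ a M hcont hb hz]
  ring

lemma hexp_bound
    (hexp : ∀ k : ℕ, ∃ C > (0:ℝ), ∀ r : ℝ, 1 ≤ r →
      ‖ρ r - ∑ j ∈ Finset.range k, M j * (r : ℂ) ^ ((a - j : ℝ) : ℂ)‖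
        ≤ C * r ^ (a - k)) (k : ℕ) :
    ∃ C : ℝ, ∀ r : ℝ, 1 ≤ r → ‖g ρ a M k r‖ ≤ C * r ^ (a - k) := by
  obtain ⟨C, _, hC⟩ := hexp k
  exact ⟨C, fun r hr => hC r hr⟩

lemma agree (hcont : ContinuousOn ρ (Set.Ici 1))
    (hexp : ∀ k : ℕ, ∃ C > (0:ℝ), ∀ r : ℝ, 1 ≤ r →
      ‖ρ r - ∑ j ∈ Finset.range k, M j * (r : ℂ) ^ ((a - j : ℝ) : ℂ)‖
        ≤ C * r ^ (a - k))
    {m k : ℕ} (hmk : m ≤ k) {z : ℂ} (hz : a + 1 - m < z.re) :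
    Fk ρ a M k z = Fk ρ a M m z := by
  induction k, hmk using Nat.le_induction with
  | base => rfl
  | succ n hmn ih =>
    obtain ⟨C, hb⟩ := hexp_bound ρ a M hexp (n+1)
    have hzn : a + 1 - (n : ℝ) < z.re := by
      have : (m:ℝ) ≤ n := Nat.cast_le.mpr hmn
      linarith
    rw [Fk_step ρ a M hcont hb hzn, ih]

lemma hN (z : ℂ) : a + 1 - ((⌈a + 2 - z.re⌉₊ : ℕ) : ℝ) < z.re := by
  have := Nat.le_ceil (a + 2 - z.re)
  linarith

lemma F_eq (hcont : ContinuousOn ρ (Set.Ici 1))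
    (hexp : ∀ k : ℕ, ∃ C > (0:ℝ), ∀ r : ℝ, 1 ≤ r →
      ‖ρ r - ∑ j ∈ Finset.range k, M j * (r : ℂ) ^ ((a - j : ℝ) : ℂ)‖
        ≤ C * r ^ (a - k))
    {k : ℕ} {z : ℂ} (hz : a + 1 - k < z.re) :
    F ρ a M z = Fk ρ a M k z := by
  set n := ⌈a + 2 - z.re⌉₊ with hn
  have hzn : a + 1 - (n : ℝ) < z.re := hN a z
  have hm : a + 1 - ((min k n : ℕ) : ℝ) < z.re := by
    rcases le_total k n with h | h
    · rwa [min_eq_left h]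
    · rwa [min_eq_right h]
  rw [show F ρ a M z = Fk ρ a M n z from rfl,
    agree ρ a M hcont hexp (min_le_right k n) hm,
    ← agree ρ a M hcont hexp (min_le_left k n) hm]

end MCaux

open MCaux

/-- Meromorphic continuation from an asymptotic expansion: if `ρ` admits an
asymptotic expansion `ρ(r) ∼ Σ M_j r^{a-j}` as `r → ∞`, then
`ζ(z) = ∫_{1}^{∞} r^{-z} ρ(r) dr` extends from the half-plane `Re z > a+1` to
a meromorphic function on `ℂ` with at most simple poles at `z = a+1-j`, `j ∈ ℕ`,
with residue `M_j` at `a+1-j`. -/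
theorem meromorphic_continuation_from_expansion
    (ρ : ℝ → ℂ) (hcont : ContinuousOn ρ (Set.Ici 1))
    (a : ℝ) (M : ℕ → ℂ)
    (hexp : ∀ k : ℕ, ∃ C > (0:ℝ), ∀ r : ℝ, 1 ≤ r →
      ‖ρ r - ∑ j ∈ Finset.range k, M j * (r : ℂ) ^ ((a - j : ℝ) : ℂ)‖
        ≤ C * r ^ (a - k)) :
    ∃ F : ℂ → ℂ,
      (∀ z : ℂ, a + 1 < z.re →
        IntegrableOn (fun r : ℝ => (r : ℂ) ^ (-z) * ρ r) (Set.Ici 1) ∧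
        F z = ∫ r in Set.Ici (1:ℝ), (r : ℂ) ^ (-z) * ρ r) ∧
      DifferentiableOn ℂ F {z : ℂ | ∀ j : ℕ, z ≠ (a : ℂ) + 1 - j} ∧
      (∀ j : ℕ, ∃ G : ℂ → ℂ, ∃ ε > (0:ℝ),
        DifferentiableOn ℂ G (Metric.ball ((a : ℂ) + 1 - j) ε) ∧
        ∀ z ∈ Metric.ball ((a : ℂ) + 1 - j) ε, z ≠ (a : ℂ) + 1 - j →
          G z = F z - M j / (z - ((a : ℂ) + 1 - j))) := by
  refine ⟨MCaux.F ρ a M, ?_, ?_, ?_⟩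
  · -- half-plane identity
    intro z hz
    have hz0 : a + 1 - ((0:ℕ):ℝ) < z.re := by push_cast; linarith
    obtain ⟨C, hb⟩ := hexp_bound ρ a M hexp 0
    have hint := I_integrable ρ a M hcont hb hz0
    have hgeq : ∀ r : ℝ, (r:ℂ) ^ (-z) * g ρ a M 0 r = (r:ℂ) ^ (-z) * ρ r := by
      intro r; simp [g]
    constructor
    · exact hint.congr_fun (fun r _ => hgeq r) measurableSet_Ici
    · rw [F_eq ρ a M hcont hexp hz0]
      simp only [Fk, Finset.range_zero, Finset.sum_empty, add_zero, MCaux.I]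
      exact setIntegral_congr_fun measurableSet_Ici (fun r _ => hgeq r)
  · -- differentiability away from poles
    intro z hz
    simp only [Set.mem_setOf_eq] at hz
    set k := ⌈a + 2 - z.re⌉₊ with hk
    have hzk : a + 1 - (k:ℝ) < z.re := hN a z
    obtain ⟨C, hb⟩ := hexp_bound ρ a M hexp k
    have hdI := I_diff ρ a M hcont hb hzk
    have hdS : DifferentiableAt ℂ
        (fun w => ∑ j ∈ Finset.range k, M j / (w - ((a:ℂ) + 1 - j))) z := by
      apply DifferentiableAt.fun_sum
      intro j _
      exact (differentiableAt_const (M j)).div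
        (differentiableAt_id.sub (differentiableAt_const _)) (sub_ne_zero.mpr (hz j))
    have hdFk : DifferentiableAt ℂ (Fk ρ a M k) z := hdI.add hdS
    have hopen : IsOpen {w : ℂ | a + 1 - (k:ℝ) < w.re} :=
      isOpen_lt continuous_const Complex.continuous_re
    have hev : MCaux.F ρ a M =ᶠ[𝓝 z] Fk ρ a M k :=
      eventually_of_mem (hopen.mem_nhds hzk) (fun w hw => F_eq ρ a M hcont hexp hw)
    exact (hdFk.congr_of_eventuallyEq hev).differentiableWithinAt
  · -- simple poles
    intro j
    set k := j + 1 with hkdef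
    refine ⟨fun w => MCaux.I ρ a M k w
      + ∑ i ∈ (Finset.range k).erase j, M i / (w - ((a:ℂ) + 1 - i)),
      1/2, by norm_num, ?_, ?_⟩
    all_goals {
      have hball : ∀ w ∈ Metric.ball ((a:ℂ) + 1 - (j:ℂ)) (1/2),
          a + 1 - (j:ℝ) - 1/2 < w.re ∧ w.re < a + 1 - (j:ℝ) + 1/2 := by
        intro w hw
        rw [Metric.mem_ball, Complex.dist_eq] at hw
        have h1 : |(w - ((a:ℂ) + 1 - (j:ℂ))).re| ≤ ‖w - ((a:ℂ) + 1 - (j:ℂ))‖ :=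
          Complex.abs_re_le_norm _
        have h2 : (w - ((a:ℂ) + 1 - (j:ℂ))).re = w.re - (a + 1 - (j:ℝ)) := by
          simp [Complex.sub_re, Complex.add_re, Complex.one_re, Complex.ofReal_re]
        rw [h2] at h1
        rw [abs_le] at h1
        exact ⟨by linarith [h1.1], by linarith [h1.2]⟩
      first
      | { -- differentiability of G
          intro w hw
          obtain ⟨hw1, hw2⟩ := hball w hw
          have hwre : a + 1 - (k:ℝ) < w.re := by
            rw [hkdef]; push_cast
            linarith
          obtain ⟨C, hb⟩ := hexp_bound ρ a M hexp k
          apply DifferentiableAt.differentiableWithinAt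
          apply (I_diff ρ a M hcont hb hwre).add
          apply DifferentiableAt.fun_sum
          intro i hi
          rw [Finset.mem_erase, Finset.mem_range] at hi
          have hij : (i:ℝ) + 1 ≤ j := by
            have : i < j := lt_of_le_of_ne (Nat.lt_succ_iff.mp hi.2) hi.1
            exact_mod_cast this
          have hne : w ≠ (a:ℂ) + 1 - i := by
            intro hcon
            have : w.re = a + 1 - (i:ℝ) := by
              rw [hcon]; simp [Complex.sub_re, Complex.add_re, Complex.one_re]
            linarith
          exact (differentiableAt_const (M i)).div
            (differentiableAt_id.sub (differentiableAt_const _)) (sub_ne_zero.mpr hne) }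
      | { -- identity on punctured ball
          intro w hw hwne
          obtain ⟨hw1, hw2⟩ := hball w hw
          have hwre : a + 1 - (k:ℝ) < w.re := by
            rw [hkdef]; push_cast
            linarith
          rw [F_eq ρ a M hcont hexp hwre]
          simp only [Fk]
          rw [← Finset.sum_erase_add (Finset.range k) _ (Finset.self_mem_range_succ j)]
          ring }
    }
end
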